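/- For every d×d Hermitian matrix M and all unit vectors ψ, φ ∈ ℂ^d: Tr[(I ⊗ |ψ⟩⟨ψ|) · M^{⊗2} · SWAP_{φ'} · M^{⊗2}] = ⟨ψ|M⁴|ψ⟩ + ⟨φ|M²|φ⟩·f − 2·Re(⟨φ|M³|ψ⟩·⟨ψ|M|φ⟩), where f := |⟨φ|M|ψ⟩|². -/

import Mathlib

open Matrix
open scoped Kronecker

noncomputable section

/-- The rank-one orthogonal projection `|ψ⟩⟨ψ|` associated to a vector `ψ ∈ ℂ^d`. -/
def ketbra {d : ℕ} (ψ : EuclideanSpace ℂ (Fin d)) : Matrix (Fin d) (Fin d) ℂ :=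
  Matrix.vecMulVec ψ (star (ψ : Fin d → ℂ))

/-- `⟨φ|M|ψ⟩`, the standard inner product of `φ` with `Mψ`. -/
def braM {d : ℕ} (φ : EuclideanSpace ℂ (Fin d)) (M : Matrix (Fin d) (Fin d) ℂ)
    (ψ : EuclideanSpace ℂ (Fin d)) : ℂ :=
  star (φ : Fin d → ℂ) ⬝ᵥ M.mulVec ψ

/-- The SWAP operator on `ℂ^d ⊗ ℂ^d`, determined by `SWAP (u ⊗ v) = v ⊗ u`. -/
def swapOp (d : ℕ) : Matrix (Fin d × Fin d) (Fin d × Fin d) ℂ :=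
  Matrix.of fun i j => if i.1 = j.2 ∧ i.2 = j.1 then (1 : ℂ) else 0

/-- `P_{ψ'} := I − |ψ⟩⟨ψ|`. -/
def Pperp {d : ℕ} (ψ : EuclideanSpace ℂ (Fin d)) : Matrix (Fin d) (Fin d) ℂ :=
  1 - ketbra ψ

/-- `SWAP_{ψ'} := P_{ψ'}^{⊗2} · SWAP · P_{ψ'}^{⊗2}`. -/
def swapPerp {d : ℕ} (ψ : EuclideanSpace ℂ (Fin d)) :
    Matrix (Fin d × Fin d) (Fin d × Fin d) ℂ :=
  (Pperp ψ ⊗ₖ Pperp ψ) * swapOp d * (Pperp ψ ⊗ₖ Pperp ψ)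

/- ### Auxiliary lemmas -/

lemma swapOp_mul_kron {d : ℕ} (A B : Matrix (Fin d) (Fin d) ℂ) :
    swapOp d * (A ⊗ₖ B) = (B ⊗ₖ A) * swapOp d := by
  ext ⟨i, j⟩ ⟨k, l⟩
  simp only [mul_apply, swapOp, kroneckerMap_apply, Matrix.of_apply, Fintype.sum_prod_type,
    ite_mul, mul_ite, one_mul, mul_one, zero_mul, mul_zero, ite_and]
  simp [Finset.sum_ite_eq, Finset.sum_ite_eq', mul_comm]

lemma trace_kron_swapOp {d : ℕ} (A B : Matrix (Fin d) (Fin d) ℂ) :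
    Matrix.trace ((A ⊗ₖ B) * swapOp d) = Matrix.trace (A * B) := by
  simp only [Matrix.trace, Matrix.diag, mul_apply, swapOp, kroneckerMap_apply, Matrix.of_apply,
    Fintype.sum_prod_type, mul_ite, mul_one, mul_zero, ite_and]
  simp [Finset.sum_ite_eq, Finset.sum_ite_eq', mul_comm, Matrix.trace, Matrix.diag, mul_apply]

lemma trace_kron_swap_kron {d : ℕ} (A B C D : Matrix (Fin d) (Fin d) ℂ) :
    Matrix.trace ((A ⊗ₖ B) * swapOp d * (C ⊗ₖ D)) = Matrix.trace (A * D * (B * C)) := by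
  rw [Matrix.trace_mul_comm, ← Matrix.mul_assoc, ← Matrix.mul_kronecker_mul,
    trace_kron_swapOp]
  have e : C * A * (D * B) = C * (A * (D * B)) := by simp only [Matrix.mul_assoc]
  rw [e, Matrix.trace_mul_comm]
  congr 1
  simp only [Matrix.mul_assoc]

lemma ketbra_mulVec {d : ℕ} (φ : EuclideanSpace ℂ (Fin d)) (v : Fin d → ℂ) :
    (ketbra φ).mulVec v = (star (φ : Fin d → ℂ) ⬝ᵥ v) • (φ : Fin d → ℂ) := by
  ext i
  simp [ketbra, Matrix.mulVec, dotProduct, Matrix.vecMulVec_apply, Finset.sum_mul,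
    Finset.mul_sum, mul_comm, mul_left_comm]

lemma trace_ketbra_mul {d : ℕ} (ψ : EuclideanSpace ℂ (Fin d)) (X : Matrix (Fin d) (Fin d) ℂ) :
    Matrix.trace (ketbra ψ * X) = braM ψ X ψ := by
  simp only [Matrix.trace, Matrix.diag, mul_apply, ketbra, Matrix.vecMulVec_apply, braM,
    dotProduct, Matrix.mulVec, Pi.star_apply, Finset.mul_sum]
  rw [Finset.sum_comm]
  refine Finset.sum_congr rfl fun a _ => ?_
  refine Finset.sum_congr rfl fun b _ => ?_
  ring

lemma braM_sandwich {d : ℕ} (χ φ ψ : EuclideanSpace ℂ (Fin d))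
    (A B : Matrix (Fin d) (Fin d) ℂ) :
    braM χ (A * ketbra φ * B) ψ = braM χ A φ * braM φ B ψ := by
  simp only [braM, ← Matrix.mulVec_mulVec, ketbra_mulVec]
  rw [Matrix.mulVec_smul, dotProduct_smul, smul_eq_mul, mul_comm]

lemma braM_conj {d : ℕ} (φ ψ : EuclideanSpace ℂ (Fin d)) (X : Matrix (Fin d) (Fin d) ℂ) :
    (starRingEnd ℂ) (braM φ X ψ) = braM ψ Xᴴ φ := by
  simp only [braM, dotProduct, Matrix.mulVec, map_sum, _root_.map_mul, Pi.star_apply,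
    Matrix.conjTranspose_apply, Finset.mul_sum]
  rw [Finset.sum_comm]
  refine Finset.sum_congr rfl fun a _ => ?_
  refine Finset.sum_congr rfl fun b _ => ?_
  simp only [RCLike.star_def, Complex.conj_conj]
  ring

lemma inner_self_one {d : ℕ} (φ : EuclideanSpace ℂ (Fin d)) (hφ : ‖φ‖ = 1) :
    star (φ : Fin d → ℂ) ⬝ᵥ (φ : Fin d → ℂ) = 1 := by
  have h : (inner ℂ φ φ : ℂ) = 1 := by
    rw [inner_self_eq_norm_sq_to_K, hφ]; norm_num
  rw [← h, PiLp.inner_apply]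
  simp [dotProduct, RCLike.inner_apply, mul_comm, Complex.mul_conj']

lemma ketbra_mul_ketbra {d : ℕ} (φ : EuclideanSpace ℂ (Fin d)) (hφ : ‖φ‖ = 1) :
    ketbra φ * ketbra φ = ketbra φ := by
  ext i j
  simp only [ketbra, mul_apply, Matrix.vecMulVec_apply, Pi.star_apply]
  have h := inner_self_one φ hφ
  simp only [dotProduct, Pi.star_apply] at h
  calc ∑ k, φ i * star (φ k) * (φ k * star (φ j))
      = φ i * star (φ j) * ∑ k, star (φ k) * φ k := by
        rw [Finset.mul_sum]; exact Finset.sum_congr rfl fun k _ => by ring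
    _ = φ i * star (φ j) := by rw [h, mul_one]

lemma Pperp_idem {d : ℕ} (φ : EuclideanSpace ℂ (Fin d)) (hφ : ‖φ‖ = 1) :
    Pperp φ * Pperp φ = Pperp φ := by
  simp only [Pperp, Matrix.sub_mul, Matrix.mul_sub, Matrix.one_mul, Matrix.mul_one,
    ketbra_mul_ketbra φ hφ]
  abel

/-- For Hermitian `M` and unit vectors `ψ, φ`, with `f := |⟨φ|M|ψ⟩|²`:
`Tr[(I ⊗ |ψ⟩⟨ψ|) M^{⊗2} SWAP_{φ'} M^{⊗2}]
  = ⟨ψ|M⁴|ψ⟩ + ⟨φ|M²|φ⟩·f − 2·Re(⟨φ|M³|ψ⟩·⟨ψ|M|φ⟩)`. -/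
theorem trace_id_ketbra_swapPerp {d : ℕ}
    (M : Matrix (Fin d) (Fin d) ℂ) (hM : M.IsHermitian)
    (ψ φ : EuclideanSpace ℂ (Fin d)) (hψ : ‖ψ‖ = 1) (hφ : ‖φ‖ = 1) :
    Matrix.trace (((1 : Matrix (Fin d) (Fin d) ℂ) ⊗ₖ ketbra ψ) * (M ⊗ₖ M) *
        swapPerp φ * (M ⊗ₖ M)) =
      braM ψ (M ^ 4) ψ + braM φ (M ^ 2) φ * (‖braM φ M ψ‖ ^ 2 : ℝ) -
        2 * ((braM φ (M ^ 3) ψ * braM ψ M φ).re : ℝ) := by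
  set P := Pperp φ with hP
  set N := M * P * M with hN
  set K := ketbra ψ with hK
  -- Step 1: reduce the big trace to `braM ψ (N * N) ψ`.
  have h1 : ((1 : Matrix (Fin d) (Fin d) ℂ) ⊗ₖ K) * (M ⊗ₖ M) * swapPerp φ * (M ⊗ₖ M)
      = (((1 : Matrix (Fin d) (Fin d) ℂ) * M * P) ⊗ₖ (K * M * P)) * swapOp d
          * ((P * M) ⊗ₖ (P * M)) := by
    rw [swapPerp, ← hP, Matrix.mul_kronecker_mul, Matrix.mul_kronecker_mul,
      Matrix.mul_kronecker_mul]
    simp only [Matrix.mul_assoc]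
  have hPP : P * P = P := Pperp_idem φ hφ
  have key : Matrix.trace (((1 : Matrix (Fin d) (Fin d) ℂ) ⊗ₖ K) * (M ⊗ₖ M) *
      swapPerp φ * (M ⊗ₖ M)) = braM ψ (N * N) ψ := by
    rw [h1, trace_kron_swap_kron, Matrix.one_mul]
    have h2 : M * P * (P * M) * (K * M * P * (P * M)) = N * K * N := by
      calc M * P * (P * M) * (K * M * P * (P * M))
          = M * (P * P) * M * (K * (M * (P * P) * M)) := by simp only [Matrix.mul_assoc]
        _ = N * K * N := by rw [hPP, ← hN]; simp only [Matrix.mul_assoc]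
    rw [h2, Matrix.trace_mul_cycle, Matrix.trace_mul_comm, hK, trace_ketbra_mul]
  rw [key]
  -- Step 2: expand `N * N`.
  have hexp : N * N = M ^ 4 - M * ketbra φ * M ^ 3 - M ^ 3 * ketbra φ * M
      + M * ketbra φ * (M ^ 2 * ketbra φ * M) := by
    rw [hN, hP, Pperp]
    simp only [pow_succ, pow_one]
    noncomm_ring
  rw [hexp]
  have hadd : ∀ (X Y : Matrix (Fin d) (Fin d) ℂ),
      braM ψ (X + Y) ψ = braM ψ X ψ + braM ψ Y ψ := by
    intro X Y
    simp [braM, Matrix.add_mulVec, dotProduct_add]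
  have hsub : ∀ (X Y : Matrix (Fin d) (Fin d) ℂ),
      braM ψ (X - Y) ψ = braM ψ X ψ - braM ψ Y ψ := by
    intro X Y
    simp [braM, Matrix.sub_mulVec, dotProduct_sub]
  have hs2 : M * ketbra φ * (M ^ 2 * ketbra φ * M)
      = M * ketbra φ * (M ^ 2 * ketbra φ * M) := rfl
  rw [hadd, hsub, hsub, braM_sandwich, braM_sandwich, braM_sandwich, braM_sandwich]
  -- Hermitian conjugation facts.
  have hM3 : (M ^ 3)ᴴ = M ^ 3 := hM.pow 3
  have hM1 : Mᴴ = M := hM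
  have c1 : braM ψ M φ = (starRingEnd ℂ) (braM φ M ψ) := by
    conv_rhs => rw [braM_conj, hM1]
  have c2 : braM ψ (M ^ 3) φ = (starRingEnd ℂ) (braM φ (M ^ 3) ψ) := by
    conv_rhs => rw [braM_conj, hM3]
  have c3 : braM φ M ψ * braM ψ M φ = ((‖braM φ M ψ‖ ^ 2 : ℝ) : ℂ) := by
    rw [c1, Complex.mul_conj]
    norm_cast
    rw [Complex.sq_norm]
  have c4 : braM ψ M φ * braM φ (M ^ 3) ψ + braM ψ (M ^ 3) φ * braM φ M ψ
      = ((2 * (braM φ (M ^ 3) ψ * braM ψ M φ).re : ℝ) : ℂ) := by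
    have hconj : braM ψ (M ^ 3) φ * braM φ M ψ
        = (starRingEnd ℂ) (braM φ (M ^ 3) ψ * braM ψ M φ) := by
      rw [_root_.map_mul, c2, c1, Complex.conj_conj, mul_comm]
    rw [hconj, mul_comm (braM ψ M φ), Complex.add_conj]
  push_cast at c3 c4 ⊢
  linear_combination braM φ (M ^ 2) φ * c3 - c4
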